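/- For any point (x, y, s) in the symmetric neighbourhood N̄(γ, λ), the residual w(x,s) = ‖(−x, −s, xᵀs)₊‖ satisfies w(x,s) ≤ n μ_λ + 2‖λ‖ + ‖λ‖². -/

import Mathlib

open Matrix

/-- Euclidean norm of a finite real vector. -/
noncomputable def enormEuc {ι : Type*} [Fintype ι] (v : ι → ℝ) : ℝ :=
  Real.sqrt (∑ i, v i ^ 2)

/-- Perturbed duality measure `μ_λ = (x+λ)ᵀ(s+λ)/n`. -/
noncomputable def muLam {n : ℕ} (lam x s : Fin n → ℝ) : ℝ :=
  (∑ i, (x i + lam i) * (s i + lam i)) / n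

/-- Membership in the symmetric neighbourhood `N̄(γ, λ)` of the perturbed
central path. -/
def InSymNbhd {m n : ℕ} (H : Matrix (Fin n) (Fin n) ℝ)
    (A : Matrix (Fin m) (Fin n) ℝ) (b : Fin m → ℝ) (c : Fin n → ℝ)
    (γ : ℝ) (lam x s : Fin n → ℝ) (y : Fin m → ℝ) : Prop :=
  A.mulVec x = b ∧ Aᵀ.mulVec y + s - H.mulVec x = c ∧
  (∀ i, 0 < x i + lam i) ∧ (∀ i, 0 < s i + lam i) ∧
  ∀ i, γ * muLam lam x s ≤ (x i + lam i) * (s i + lam i) ∧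
    (x i + lam i) * (s i + lam i) ≤ muLam lam x s / γ

/-- `w(x,s) = ‖(−x, −s, xᵀs)₊‖` (componentwise positive part). -/
noncomputable def wRes {n : ℕ} (x s : Fin n → ℝ) : ℝ :=
  Real.sqrt ((∑ i, max (-x i) 0 ^ 2) + (∑ i, max (-s i) 0 ^ 2) + max (x ⬝ᵥ s) 0 ^ 2)

/-- For any point `(x, y, s)` in the symmetric neighbourhood `N̄(γ, λ)`, the
residual `w(x,s) = ‖(−x, −s, xᵀs)₊‖` satisfies
`w(x,s) ≤ n μ_λ + 2‖λ‖ + ‖λ‖²`. -/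
theorem w_bound_in_symmetric_neighbourhood {m n : ℕ}
    (H : Matrix (Fin n) (Fin n) ℝ) (A : Matrix (Fin m) (Fin n) ℝ)
    (b : Fin m → ℝ) (c : Fin n → ℝ)
    (γ : ℝ) (hγ : γ ∈ Set.Ioo (0 : ℝ) 1)
    (lam : Fin n → ℝ) (hlam : 0 ≤ lam)
    (x : Fin n → ℝ) (y : Fin m → ℝ) (s : Fin n → ℝ)
    (hmem : InSymNbhd H A b c γ lam x s y) :
    wRes x s ≤ n * muLam lam x s + 2 * enormEuc lam + enormEuc lam ^ 2 := by
  obtain ⟨hA, hC, hx, hs, hN⟩ := hmem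
  have hL0 : 0 ≤ enormEuc lam := Real.sqrt_nonneg _
  have hL2 : enormEuc lam ^ 2 = ∑ i, lam i ^ 2 := Real.sq_sqrt (by positivity)
  have hlam' : ∀ i, 0 ≤ lam i := fun i => hlam i
  have hM : (n : ℝ) * muLam lam x s = ∑ i, (x i + lam i) * (s i + lam i) := by
    rcases Nat.eq_zero_or_pos n with h | h
    · subst h; simp [muLam]
    · have hn : (n : ℝ) ≠ 0 := Nat.cast_ne_zero.mpr h.ne'
      rw [muLam]; field_simp
  have hM0 : 0 ≤ (n : ℝ) * muLam lam x s := by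
    rw [hM]; exact Finset.sum_nonneg fun i _ => le_of_lt (mul_pos (hx i) (hs i))
  have ha : ∑ i, max (-x i) 0 ^ 2 ≤ enormEuc lam ^ 2 := by
    rw [hL2]
    refine Finset.sum_le_sum fun i _ => ?_
    exact pow_le_pow_left₀ (le_max_right _ _)
      (max_le (by linarith [hx i]) (hlam' i)) 2
  have hb : ∑ i, max (-s i) 0 ^ 2 ≤ enormEuc lam ^ 2 := by
    rw [hL2]
    refine Finset.sum_le_sum fun i _ => ?_
    exact pow_le_pow_left₀ (le_max_right _ _)
      (max_le (by linarith [hs i]) (hlam' i)) 2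
  have hc : max (x ⬝ᵥ s) 0 ≤ n * muLam lam x s + enormEuc lam ^ 2 := by
    refine max_le ?_ (by nlinarith [hM0, sq_nonneg (enormEuc lam)])
    rw [hM, hL2, dotProduct, ← Finset.sum_add_distrib]
    refine Finset.sum_le_sum fun i _ => ?_
    nlinarith [hx i, hs i, hlam' i]
  have hc0 : 0 ≤ max (x ⬝ᵥ s) 0 := le_max_right _ _
  have ha0 : 0 ≤ ∑ i, max (-x i) 0 ^ 2 := Finset.sum_nonneg fun i _ => sq_nonneg _
  have hb0 : 0 ≤ ∑ i, max (-s i) 0 ^ 2 := Finset.sum_nonneg fun i _ => sq_nonneg _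
  have key : (∑ i, max (-x i) 0 ^ 2) + (∑ i, max (-s i) 0 ^ 2) + max (x ⬝ᵥ s) 0 ^ 2
      ≤ (n * muLam lam x s + 2 * enormEuc lam + enormEuc lam ^ 2) ^ 2 := by
    nlinarith [mul_self_le_mul_self hc0 hc, hM0, hL0, ha, hb, sq_nonneg (enormEuc lam),
      mul_nonneg hL0 hM0, mul_nonneg hL0 (sq_nonneg (enormEuc lam))]
  rw [wRes]
  calc Real.sqrt _ ≤ Real.sqrt ((n * muLam lam x s + 2 * enormEuc lam + enormEuc lam ^ 2) ^ 2) :=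
        Real.sqrt_le_sqrt key
    _ = _ := Real.sqrt_sq (by nlinarith [hM0, hL0, sq_nonneg (enormEuc lam)])
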